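/- arXiv:2109.07328 — 3 statements merged into one kernel-verified Lean document; each statement's English description precedes it below -/
import Mathlib

section
/- For all positive integers k and r with 0 < r < M_k = 2^k - 1, we have s(M_k + r) = s(M_k) + s(r). -/
/-- `Alist k` is the list `A_{k+1}`: `A_1 = [5]`, `A_{k+1} = A_k ++ A_k ++ [1]`. -/
def Alist : ℕ → List ℕ
  | 0 => [5]
  | k+1 => Alist k ++ Alist k ++ [1]

/-- `aseq n` is the `n`-th term (1-indexed) of the limit of the lists `A_k`;
`aseq 0 = 0` by convention. -/
def aseq (n : ℕ) : ℕ := (Alist n).getD (n - 1) 0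

/-- Partial sums: `s n = a_1 + ⋯ + a_n`, `s 0 = 0`. -/
def s (n : ℕ) : ℕ := ∑ i ∈ Finset.Icc 1 n, aseq i

lemma Alist_length (k : ℕ) : (Alist k).length = 2 ^ (k+1) - 1 := by
  induction k with
  | zero => rfl
  | succ k ih =>
    have h1 : 1 ≤ 2 ^ (k+1) := Nat.one_le_two_pow
    simp [Alist, ih, pow_succ]
    omega

lemma Alist_prefix_succ (k : ℕ) : Alist k <+: Alist (k+1) :=
  ⟨Alist k ++ [1], by simp [Alist]⟩

lemma Alist_prefix {k n : ℕ} (h : k ≤ n) : Alist k <+: Alist n := by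
  induction n with
  | zero => simp [Nat.le_zero.mp h]
  | succ n ih =>
    rcases Nat.lt_or_ge k (n+1) with h' | h'
    · exact (ih (Nat.lt_succ_iff.mp h')).trans (Alist_prefix_succ n)
    · have : k = n + 1 := le_antisymm h h'
      simp [this]

lemma getD_prefix {l₁ l₂ : List ℕ} (h : l₁ <+: l₂) {m : ℕ} (hm : m < l₁.length) :
    l₂.getD m 0 = l₁.getD m 0 := by
  rw [List.getD_eq_getElem _ _ hm, List.getD_eq_getElem _ _ (hm.trans_le h.length_le),
    h.getElem hm]

/-- `aseq n` can be computed from any `Alist k` long enough. -/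
lemma aseq_eq (n k : ℕ) (h : n - 1 < (Alist k).length) :
    aseq n = (Alist k).getD (n-1) 0 := by
  rcases le_total k n with h' | h'
  · exact getD_prefix (Alist_prefix h') h
  · have hn : n - 1 < (Alist n).length := by
      rw [Alist_length]
      have h2 : n < 2 ^ n := Nat.lt_two_pow_self
      have h3 : 2 ^ (n+1) = 2 ^ n * 2 := pow_succ 2 n
      omega
    rw [aseq, getD_prefix (Alist_prefix h') hn]

lemma aseq_shift (k i : ℕ) (hk : 1 ≤ k) (hi0 : 0 < i) (hi : i < 2 ^ k - 1) :
    aseq (2 ^ k - 1 + i) = aseq i := by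
  obtain ⟨j, rfl⟩ : ∃ j, k = j + 1 := ⟨k - 1, by omega⟩
  set M := 2 ^ (j+1) - 1 with hM
  have hlenj : (Alist j).length = M := Alist_length j
  have h1 : 1 ≤ 2 ^ (j+1) := Nat.one_le_two_pow
  have hlenk : (Alist (j+1)).length = 2 ^ (j+2) - 1 := Alist_length (j+1)
  have hidx : M + i - 1 < (Alist (j+1)).length := by
    rw [hlenk]; rw [pow_succ] at *; omega
  have hidx2 : i - 1 < (Alist j).length := by omega
  rw [aseq_eq (M + i) (j+1) hidx, aseq_eq i j hidx2]
  have heq : M + i - 1 = (Alist j).length + (i - 1) := by omega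
  rw [List.getD_eq_getElem _ _ hidx, List.getD_eq_getElem _ _ hidx2]
  have hA : Alist (j+1) = Alist j ++ (Alist j ++ [1]) := by simp [Alist]
  simp only [hA]
  rw [List.getElem_append_right (by omega)]
  rw [List.getElem_append_left (by omega)]
  congr 1
  omega

/-- For positive integers `k`, `r` with `0 < r < M_k = 2^k − 1`,
`s(M_k + r) = s(M_k) + s(r)`. -/
theorem s_add_of_lt_mersenne (k r : ℕ) (hk : 1 ≤ k) (hr0 : 0 < r)
    (hr : r < 2 ^ k - 1) :
    s ((2 ^ k - 1) + r) = s (2 ^ k - 1) + s r := by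
  set M := 2 ^ k - 1 with hM
  have hIcc : ∀ n : ℕ, Finset.Icc 1 n = Finset.Ioc 0 n := by
    intro n; ext x; simp [Nat.lt_iff_add_one_le]
  have hsplit : Finset.Ioc 0 M ∪ Finset.Ioc M (M + r) = Finset.Ioc 0 (M + r) :=
    Finset.Ioc_union_Ioc_eq_Ioc (by omega) (by omega)
  have hdisj : Disjoint (Finset.Ioc 0 M) (Finset.Ioc M (M + r)) := by
    rw [Finset.disjoint_left]; intro a ha hb
    simp only [Finset.mem_Ioc] at ha hb; omega
  simp only [s, hIcc]
  rw [← hsplit, Finset.sum_union hdisj]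
  congr 1
  have hmap : Finset.Ioc M (M + r) = Finset.map (addLeftEmbedding M) (Finset.Ioc 0 r) := by
    rw [Finset.map_add_left_Ioc]; simp
  rw [hmap, Finset.sum_map]
  apply Finset.sum_congr rfl
  intro i hi
  simp only [Finset.mem_Ioc] at hi
  exact aseq_shift k i hk hi.1 (by omega)
end

section
/- For each positive integer n, if n = ε_1·M_1 + ε_2·M_2 + ... + ε_ℓ·M_ℓ is the M-expansion of n, then s(n) = ε_1·μ_1 + ε_2·μ_2 + ... + ε_ℓ·μ_ℓ. -/
lemma alist_length (k : ℕ) : (Alist k).length = 2^(k+1) - 1 := by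
  induction k with
  | zero => rfl
  | succ k ih =>
    have h1 : (1:ℕ) ≤ 2^(k+1) := Nat.one_le_two_pow
    simp [Alist, ih, pow_succ]
    omega

lemma alist_prefix {k m : ℕ} (h : k ≤ m) : Alist k <+: Alist m := by
  induction m with
  | zero => simpa [Nat.le_zero.mp h]
  | succ m ih =>
    rcases Nat.lt_or_ge k (m+1) with h' | h'
    · exact (ih (Nat.lt_succ_iff.mp h')).trans ⟨Alist m ++ [1], by simp [Alist]⟩
    · have : k = m + 1 := le_antisymm h h'
      simp [this]

lemma prefix_getD {l₁ l₂ : List ℕ} (h : l₁ <+: l₂) {i : ℕ} (hi : i < l₁.length) :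
    l₂.getD i 0 = l₁.getD i 0 := by
  obtain ⟨t, rfl⟩ := h
  exact List.getD_append _ _ _ _ hi

lemma aseq_eq_getD {k i : ℕ} (hi1 : 1 ≤ i) (h : i ≤ 2^(k+1) - 1) :
    aseq i = (Alist k).getD (i - 1) 0 := by
  rcases Nat.le_total i k with hik | hik
  · have hlen : i - 1 < (Alist i).length := by
      rw [alist_length]
      have h1 : i < 2 ^ i := Nat.lt_two_pow_self (n := i)
      have h2 : 2 ^ i ≤ 2 ^ (i+1) := Nat.pow_le_pow_right (by norm_num) (Nat.le_succ i)
      omega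
    rw [aseq, prefix_getD (alist_prefix hik) hlen]
  · have hlen : i - 1 < (Alist k).length := by rw [alist_length]; omega
    rw [aseq, ← prefix_getD (alist_prefix hik) hlen]

lemma aseq_add {k i : ℕ} (hk : 1 ≤ k) (hi1 : 1 ≤ i) (hi : i ≤ 2^k - 1) :
    aseq (2^k - 1 + i) = aseq i := by
  obtain ⟨m, rfl⟩ := Nat.exists_eq_add_of_le hk
  have h2 : (1:ℕ) ≤ 2^(1+m) := Nat.one_le_two_pow
  have hL : (Alist m).length = 2^(1+m) - 1 := by rw [alist_length]; ring_nf
  have lhs : aseq (2^(1+m) - 1 + i) = (Alist (1+m)).getD (2^(1+m) - 1 + i - 1) 0 := by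
    apply aseq_eq_getD (by omega)
    have : (2:ℕ)^(1+m+1) = 2 * 2^(1+m) := by ring
    omega
  have rhs : aseq i = (Alist m).getD (i - 1) 0 := by
    apply aseq_eq_getD hi1
    have : (2:ℕ)^(m+1) = 2^(1+m) := by ring_nf
    omega
  rw [lhs, rhs]
  have hA : Alist (1+m) = Alist m ++ (Alist m ++ [1]) := by
    have h1 : 1 + m = m + 1 := by omega
    rw [h1, Alist]; simp
  rw [hA]
  have hidx : 2^(1+m) - 1 + i - 1 = (Alist m).length + (i - 1) := by omega
  rw [hidx, List.getD_append_right _ _ _ _ (Nat.le_add_right _ _), Nat.add_sub_cancel_left]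
  exact List.getD_append _ _ _ _ (by omega)

lemma s_split {k r : ℕ} (hk : 1 ≤ k) (hr : r ≤ 2^k - 1) :
    s (2^k - 1 + r) = s (2^k - 1) + s r := by
  have hIcc : ∀ m : ℕ, Finset.Icc 1 m = Finset.Ioc 0 m := by
    intro m; ext x; simp [Nat.lt_iff_add_one_le]
  rw [s, s, s, hIcc, hIcc, hIcc,
    ← Finset.sum_Ioc_consecutive _ (Nat.zero_le (2^k-1)) (Nat.le_add_right _ r)]
  congr 1
  have h2 : Finset.Ioc (2^k-1) (2^k-1+r) = (Finset.Ioc 0 r).map (addLeftEmbedding (2^k-1)) := by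
    rw [Finset.map_add_left_Ioc]; simp
  rw [h2, Finset.sum_map]
  apply Finset.sum_congr rfl
  intro i hi
  simp only [Finset.mem_Ioc] at hi
  exact aseq_add hk hi.1 (by omega)

lemma aseq_top {k : ℕ} (hk : 1 ≤ k) : aseq (2^(k+1) - 1) = 1 := by
  obtain ⟨m, rfl⟩ := Nat.exists_eq_add_of_le hk
  have h2 : (1:ℕ) ≤ 2^(1+m) := Nat.one_le_two_pow
  have h3 : (2:ℕ)^(1+m+1) = 2 * 2^(1+m) := by ring
  rw [aseq_eq_getD (k := 1+m) (by omega) le_rfl]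
  have hA : Alist (1+m) = Alist m ++ (Alist m ++ [1]) := by
    have h1 : 1 + m = m + 1 := by omega
    rw [h1, Alist]; simp
  have hL : (Alist m).length = 2^(m+1) - 1 := alist_length m
  have hL' : (2:ℕ)^(m+1) = 2^(1+m) := by ring_nf
  have hidx : 2^(1+m+1) - 1 - 1 = (Alist m).length + (Alist m).length := by omega
  rw [hA, hidx, List.getD_append_right _ _ _ _ (Nat.le_add_right _ _), Nat.add_sub_cancel_left,
    List.getD_append_right _ _ _ _ le_rfl]
  simp

lemma s_succ (n : ℕ) : s (n + 1) = s n + aseq (n + 1) := by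
  rw [s, s, Finset.sum_Icc_succ_top (by omega)]

lemma s_mersenne {k : ℕ} (hk : 1 ≤ k) : s (2^k - 1) = 3 * 2^k - 1 := by
  induction k with
  | zero => omega
  | succ k ih =>
    rcases Nat.eq_or_lt_of_le hk with h1 | h1
    · have : s 1 = 5 := by
        rw [s, Finset.Icc_self, Finset.sum_singleton]; rfl
      rw [← h1]; simpa using this
    · have hk1 : 1 ≤ k := by omega
      have h2 : (1:ℕ) ≤ 2^k := Nat.one_le_two_pow
      have hpow : (2:ℕ)^(k+1) = 2 * 2^k := by ring
      have e1 : 2^(k+1) - 1 = (2^k - 1 + (2^k - 1)) + 1 := by omega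
      rw [e1, s_succ, ← e1, s_split hk1 le_rfl, ih hk1, aseq_top hk1]
      omega

/-- The largest `ℓ` with `2^ℓ - 1 ≤ n` (for `n ≥ 1`). -/
def maxM (n : ℕ) : ℕ := Nat.findGreatest (fun ℓ => 2 ^ ℓ - 1 ≤ n) n

/-- `Mdig n i` is the digit `ε_i` in the greedy M-expansion
`n = ε_1·M_1 + ⋯ + ε_ℓ·M_ℓ` (with `M_i = 2^i - 1`): repeatedly subtract the
largest Mersenne number `M_ℓ ≤ n`, recording a digit `2` if the remainder
equals `M_ℓ` again. -/
def Mdig (n : ℕ) : ℕ → ℕ :=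
  if h : n = 0 then fun _ => 0
  else
    let ℓ := maxM n
    let r := n - (2 ^ ℓ - 1)
    if r = 2 ^ ℓ - 1 then fun i => if i = ℓ then 2 else 0
    else fun i => (if i = ℓ then 1 else 0) + Mdig r i
termination_by n
decreasing_by
  have h1 : 1 ≤ maxM n :=
    Nat.le_findGreatest (Nat.one_le_iff_ne_zero.mpr h) (by simpa using Nat.one_le_iff_ne_zero.mpr h)
  have h2 : 2 ≤ 2 ^ maxM n := by
    calc (2 : ℕ) = 2 ^ 1 := rfl
    _ ≤ 2 ^ maxM n := Nat.pow_le_pow_right (by norm_num) h1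
  have h3 : 1 ≤ n := Nat.one_le_iff_ne_zero.mpr h
  omega

lemma maxM_pos {n : ℕ} (hn : 1 ≤ n) : 1 ≤ maxM n :=
  Nat.le_findGreatest hn (by simpa using hn)

lemma maxM_le {n : ℕ} : maxM n ≤ n := Nat.findGreatest_le n

lemma maxM_spec {n : ℕ} (hn : 1 ≤ n) : 2 ^ maxM n - 1 ≤ n :=
  Nat.findGreatest_spec (P := fun ℓ => 2 ^ ℓ - 1 ≤ n) (m := 1) hn (by simpa using hn)

lemma maxM_ub {n : ℕ} (hn : 1 ≤ n) : n < 2 ^ (maxM n + 1) - 1 := by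
  by_contra hc
  push_neg at hc
  have h1 : maxM n + 1 ≤ 2 ^ (maxM n + 1) - 1 := by
    have := Nat.lt_two_pow_self (n := maxM n + 1); omega
  have h2 : maxM n + 1 ≤ Nat.findGreatest (fun ℓ => 2 ^ ℓ - 1 ≤ n) n :=
    Nat.le_findGreatest (by omega) hc
  have : maxM n + 1 ≤ maxM n := h2
  omega

lemma mdig_eq_zero {n i : ℕ} (h : n < i) : Mdig n i = 0 := by
  induction n using Nat.strong_induction_on with
  | _ n ih =>
    rw [Mdig]
    rcases eq_or_ne n 0 with rfl | hn0
    · simp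
    · have hn : 1 ≤ n := Nat.one_le_iff_ne_zero.mpr hn0
      have hiℓ : i ≠ maxM n := by have := maxM_le (n := n); omega
      have hM : 1 ≤ 2 ^ maxM n - 1 := by
        have := maxM_pos hn
        have : (2:ℕ) ≤ 2 ^ maxM n := by
          calc (2:ℕ) = 2^1 := rfl
          _ ≤ _ := Nat.pow_le_pow_right (by norm_num) this
        omega
      simp only [dif_neg hn0]
      split
      · simp [hiℓ]
      · simp only [if_neg hiℓ, zero_add]
        exact ih _ (by have := maxM_spec hn; omega) (by have := maxM_spec hn; omega)

/-- Sum of the M-digits of `n` (all nonzero digits have index `≤ n`). -/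
def sigmaM (n : ℕ) : ℕ := ∑ i ∈ Finset.Icc 1 n, Mdig n i

/-- If `n = ε_1·M_1 + ⋯ + ε_ℓ·M_ℓ` is the M-expansion of `n`, then
`s(n) = ε_1·μ_1 + ⋯ + ε_ℓ·μ_ℓ`, where `μ_i = 2^{i+1} + 2^i − 1`. -/
theorem s_eq_mu_expansion (n : ℕ) (hn : 1 ≤ n) :
    s n = ∑ i ∈ Finset.Icc 1 n, Mdig n i * (2 ^ (i + 1) + 2 ^ i - 1) := by
  induction n using Nat.strong_induction_on with
  | _ n ih =>
    have hℓ1 : 1 ≤ maxM n := maxM_pos hn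
    have hMle : 2 ^ maxM n - 1 ≤ n := maxM_spec hn
    have hub : n < 2 ^ (maxM n + 1) - 1 := maxM_ub hn
    have hpow : (2:ℕ) ^ (maxM n + 1) = 2 * 2 ^ maxM n := by ring
    have h2 : (2:ℕ) ≤ 2 ^ maxM n := by
      calc (2:ℕ) = 2 ^ 1 := rfl
      _ ≤ _ := Nat.pow_le_pow_right (by norm_num) hℓ1
    have hℓn : maxM n ∈ Finset.Icc 1 n := by
      simp only [Finset.mem_Icc]
      have := Nat.lt_two_pow_self (n := maxM n); omega
    have hr : n - (2 ^ maxM n - 1) ≤ 2 ^ maxM n - 1 := by omega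
    have hsn : s n = s (2 ^ maxM n - 1) + s (n - (2 ^ maxM n - 1)) := by
      conv_lhs => rw [show n = 2 ^ maxM n - 1 + (n - (2 ^ maxM n - 1)) by omega]
      rw [s_split hℓ1 hr]
    have hsM : s (2 ^ maxM n - 1) = 3 * 2 ^ maxM n - 1 := s_mersenne hℓ1
    rcases eq_or_ne (n - (2 ^ maxM n - 1)) (2 ^ maxM n - 1) with hcase | hcase
    · have hd : ∀ i, Mdig n i * (2 ^ (i + 1) + 2 ^ i - 1) =
          if i = maxM n then 2 * (2 ^ (maxM n + 1) + 2 ^ maxM n - 1) else 0 := by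
        intro i
        rw [Mdig]
        simp only [dif_neg (by omega : n ≠ 0), if_pos hcase]
        by_cases h : i = maxM n <;> simp [h]
      rw [Finset.sum_congr rfl (fun i _ => hd i), Finset.sum_ite_eq' _ _ _, if_pos hℓn,
        hsn, hcase, hsM]
      omega
    · have hd : ∀ i, Mdig n i =
          (if i = maxM n then 1 else 0) + Mdig (n - (2 ^ maxM n - 1)) i := by
        intro i
        rw [Mdig]
        simp only [dif_neg (by omega : n ≠ 0), if_neg hcase]
      have hsplit : ∑ i ∈ Finset.Icc 1 n, Mdig n i * (2 ^ (i + 1) + 2 ^ i - 1) =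
          (∑ i ∈ Finset.Icc 1 n, if i = maxM n then (2 ^ (maxM n + 1) + 2 ^ maxM n - 1) else 0)
          + ∑ i ∈ Finset.Icc 1 n, Mdig (n - (2 ^ maxM n - 1)) i * (2 ^ (i + 1) + 2 ^ i - 1) := by
        rw [← Finset.sum_add_distrib]
        apply Finset.sum_congr rfl
        intro i _
        rw [hd i, add_mul]
        by_cases h : i = maxM n <;> simp [h]
      have hsub : ∑ i ∈ Finset.Icc 1 n, Mdig (n - (2 ^ maxM n - 1)) i * (2 ^ (i + 1) + 2 ^ i - 1)
          = ∑ i ∈ Finset.Icc 1 (n - (2 ^ maxM n - 1)),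
              Mdig (n - (2 ^ maxM n - 1)) i * (2 ^ (i + 1) + 2 ^ i - 1) := by
        symm
        apply Finset.sum_subset (Finset.Icc_subset_Icc_right (by omega))
        intro x hx hnx
        simp only [Finset.mem_Icc] at hx hnx
        rw [mdig_eq_zero (by omega), zero_mul]
      rw [hsplit, Finset.sum_ite_eq' _ _ _, if_pos hℓn, hsub, hsn, hsM]
      rcases eq_or_ne (n - (2 ^ maxM n - 1)) 0 with h0 | h0
      · rw [h0]
        simp [s]
        omega
      · rw [← ih _ (by omega) (by omega)]
        omega
end

section
/- For the family h_k = 2^{k+2} − k, the μ-expansion of 2^{h_k} satisfies φ(2^{h_k}) = 2^{k+1}, and consequently α(h_k) → 1 as k → ∞; hence limsup_{h→∞} α(h) = 1. -/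
/-- `μ_i = 2^{i+1} + 2^i - 1`. -/
def mu (i : ℕ) : ℕ := 2 ^ (i + 1) + 2 ^ i - 1

/-- The largest `ℓ ≥ 1` with `μ_ℓ ≤ n` (`0` if there is none). -/
def maxMu (n : ℕ) : ℕ := Nat.findGreatest (fun ℓ => 0 < ℓ ∧ mu ℓ ≤ n) n

/-- `mudig n i` is the digit `ε_i` in the greedy μ-expansion
`n = r + ε_1·μ_1 + ⋯ + ε_ℓ·μ_ℓ` with `r ∈ {0,…,4}`. -/
def mudig (n : ℕ) : ℕ → ℕ :=
  if _h : n ≤ 4 then fun _ => 0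
  else
    let ℓ := maxMu n
    let r := n - mu ℓ
    if r = mu ℓ then fun i => if i = ℓ then 2 else 0
    else fun i => (if i = ℓ then 1 else 0) + mudig r i
termination_by n
decreasing_by
  have h1 : 1 ≤ maxMu n :=
    Nat.le_findGreatest (by omega) ⟨one_pos, by simp [mu]; omega⟩
  have h2 : 2 ≤ 2 ^ maxMu n := by
    calc (2 : ℕ) = 2 ^ 1 := rfl
    _ ≤ 2 ^ maxMu n := Nat.pow_le_pow_right (by norm_num) h1
  have : 5 ≤ mu (maxMu n) := by simp [mu]; omega
  omega

/-- Sum of the μ-digits of `m`. -/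
def phi (m : ℕ) : ℕ := ∑ i ∈ Finset.Icc 1 m, mudig m i

/-- `α(h) = (2·φ(2^h) − (h+2)) / log₂(h+2)`. -/
noncomputable def alphaF (h : ℕ) : ℝ :=
  (2 * (phi (2 ^ h) : ℝ) - (h + 2)) / Real.logb 2 (h + 2)

open Filter Real

section
variable {n m i j : ℕ}
lemma mu_eq (i : ℕ) : mu i = 3 * 2 ^ i - 1 := by
  have : (2:ℕ) ^ (i+1) = 2 * 2 ^ i := by ring
  simp [mu, this]; omega
lemma two_pow_le (h : i ≤ j) : (2:ℕ) ^ i ≤ 2 ^ j := Nat.pow_le_pow_right (by norm_num) h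
lemma mu_mono (h : i ≤ j) : mu i ≤ mu j := by
  have := two_pow_le h
  rw [mu_eq, mu_eq]; omega
lemma le_mu (i : ℕ) : i ≤ mu i := by
  have h1 : i < 2 ^ i := (Nat.lt_two_pow_self (n := i))
  rw [mu_eq]; omega
lemma maxMu_le (n : ℕ) : maxMu n ≤ n := Nat.findGreatest_le n
lemma maxMu_pos (h : 5 ≤ n) : 1 ≤ maxMu n :=
  Nat.le_findGreatest (by omega) ⟨one_pos, by rw [mu_eq]; omega⟩
lemma mu_maxMu_le (h : 5 ≤ n) : mu (maxMu n) ≤ n :=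
  (Nat.findGreatest_spec (P := fun ℓ => 0 < ℓ ∧ mu ℓ ≤ n) (m := 1) (by omega)
    ⟨one_pos, by rw [mu_eq]; omega⟩).2
lemma lt_mu_maxMu_succ (h : 5 ≤ n) : n < mu (maxMu n + 1) := by
  by_contra hle
  push_neg at hle
  have h1 : maxMu n + 1 ≤ n := le_trans (le_mu _) hle
  have h2 := Nat.le_findGreatest (P := fun ℓ => 0 < ℓ ∧ mu ℓ ≤ n) h1 ⟨Nat.succ_pos _, hle⟩
  simp only [maxMu] at h2
  omega
lemma maxMu_eq {ℓ : ℕ} (h1 : 1 ≤ ℓ) (h2 : mu ℓ ≤ n) (h3 : n < mu (ℓ + 1)) :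
    maxMu n = ℓ := by
  apply Nat.findGreatest_eq_iff.mpr
  refine ⟨le_trans (le_mu ℓ) h2, fun _ => ⟨h1, h2⟩, fun k hk hk2 => ?_⟩
  rintro ⟨-, hmu⟩
  exact absurd (le_trans (mu_mono (show ℓ+1 ≤ k from hk)) hmu) (by omega)
lemma maxMu_mono (h : n ≤ m) : maxMu n ≤ maxMu m :=
  Nat.findGreatest_mono (fun ℓ ⟨a, b⟩ => ⟨a, le_trans b h⟩) h

lemma mudig_small (h : n ≤ 4) (i : ℕ) : mudig n i = 0 := by
  rw [mudig]; simp [h]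
lemma mudig_two (h : ¬ n ≤ 4) (hr : n - mu (maxMu n) = mu (maxMu n)) (i : ℕ) :
    mudig n i = if i = maxMu n then 2 else 0 := by
  rw [mudig]; simp only [dif_neg h, if_pos hr]
lemma mudig_one (h : ¬ n ≤ 4) (hr : n - mu (maxMu n) ≠ mu (maxMu n)) (i : ℕ) :
    mudig n i = (if i = maxMu n then 1 else 0) + mudig (n - mu (maxMu n)) i := by
  rw [mudig]; simp only [dif_neg h, if_neg hr]

lemma mudig_zero_of_big : ∀ n i, maxMu n < i → mudig n i = 0 := by
  intro n
  induction n using Nat.strong_induction_on with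
  | _ n ih =>
    intro i hi
    by_cases h4 : n ≤ 4
    · exact mudig_small h4 i
    · have h5 : 5 ≤ n := by omega
      have hmu5 : 5 ≤ mu (maxMu n) := by
        have h1 : (2:ℕ) ≤ 2 ^ maxMu n := by
          calc (2:ℕ) = 2 ^ 1 := rfl
          _ ≤ _ := two_pow_le (maxMu_pos h5)
        rw [mu_eq]; omega
      by_cases hr : n - mu (maxMu n) = mu (maxMu n)
      · rw [mudig_two h4 hr]; simp; omega
      · rw [mudig_one h4 hr]
        have hlt : n - mu (maxMu n) < n := by
          have := mu_maxMu_le h5; omega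
        have : maxMu (n - mu (maxMu n)) < i :=
          lt_of_le_of_lt (maxMu_mono (Nat.sub_le _ _)) hi
        rw [ih _ hlt i this]
        simp; omega

lemma phi_small (h : n ≤ 4) : phi n = 0 := by
  unfold phi
  exact Finset.sum_eq_zero fun i _ => mudig_small h i

lemma phi_two (h4 : ¬ n ≤ 4) (hr : n - mu (maxMu n) = mu (maxMu n)) : phi n = 2 := by
  have h5 : 5 ≤ n := by omega
  unfold phi
  rw [Finset.sum_congr rfl (fun i _ => mudig_two h4 hr i)]
  rw [Finset.sum_ite_eq' (Finset.Icc 1 n) (maxMu n) (fun _ => 2)]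
  simp [Finset.mem_Icc, maxMu_pos h5, maxMu_le n]

lemma phi_one (h4 : ¬ n ≤ 4) (hr : n - mu (maxMu n) ≠ mu (maxMu n)) :
    phi n = 1 + phi (n - mu (maxMu n)) := by
  have h5 : 5 ≤ n := by omega
  unfold phi
  rw [Finset.sum_congr rfl (fun i _ => mudig_one h4 hr i), Finset.sum_add_distrib]
  congr 1
  · rw [Finset.sum_ite_eq' (Finset.Icc 1 n) (maxMu n) (fun _ => 1)]
    simp [Finset.mem_Icc, maxMu_pos h5, maxMu_le n]
  · symm
    apply Finset.sum_subset
    · apply Finset.Icc_subset_Icc_right (Nat.sub_le _ _)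
    · intro x hx hnx
      simp only [Finset.mem_Icc] at hx hnx
      apply mudig_zero_of_big
      have : n - mu (maxMu n) < x := by omega
      exact lt_of_le_of_lt (maxMu_le _) this
end

section
variable {n m i j : ℕ}
lemma phi_pow_step (m b : ℕ) (hm : 1 ≤ m) (hb : b + 3 ≤ 2 ^ (m + 1)) :
    phi (2 ^ (m + 2) + b) = 1 + phi (2 ^ m + (b + 1)) := by
  have hx : (1:ℕ) ≤ 2 ^ m := Nat.one_le_two_pow
  have e1 : (2:ℕ) ^ (m+1) = 2 * 2 ^ m := by ring
  have e2 : (2:ℕ) ^ (m+2) = 4 * 2 ^ m := by ring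
  have h4 : ¬ (2 ^ (m+2) + b ≤ 4) := by omega
  have hmax : maxMu (2 ^ (m+2) + b) = m := by
    apply maxMu_eq hm
    · rw [mu_eq]; omega
    · rw [mu_eq]; omega
  have hrval : 2 ^ (m+2) + b - mu (maxMu (2 ^ (m+2) + b)) = 2 ^ m + (b + 1) := by
    rw [hmax, mu_eq]; omega
  have hrne : 2 ^ (m+2) + b - mu (maxMu (2 ^ (m+2) + b)) ≠ mu (maxMu (2 ^ (m+2) + b)) := by
    rw [hrval, hmax, mu_eq]; omega
  rw [phi_one h4 hrne, hrval]

lemma phi_pow_two (m b : ℕ) (hm : 1 ≤ m) (hb : b + 2 = 2 ^ (m + 1)) :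
    phi (2 ^ (m + 2) + b) = 2 := by
  have hx : (2:ℕ) ≤ 2 ^ m := by
    calc (2:ℕ) = 2 ^ 1 := rfl
    _ ≤ _ := two_pow_le hm
  have e1 : (2:ℕ) ^ (m+1) = 2 * 2 ^ m := by ring
  have e2 : (2:ℕ) ^ (m+2) = 4 * 2 ^ m := by ring
  have h4 : ¬ (2 ^ (m+2) + b ≤ 4) := by omega
  have hmax : maxMu (2 ^ (m+2) + b) = m := by
    apply maxMu_eq hm
    · rw [mu_eq]; omega
    · rw [mu_eq]; omega
  have hreq : 2 ^ (m+2) + b - mu (maxMu (2 ^ (m+2) + b)) = mu (maxMu (2 ^ (m+2) + b)) := by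
    rw [hmax, mu_eq]; omega
  exact phi_two h4 hreq

lemma phi_chain : ∀ (j c b : ℕ), 1 ≤ c → b + j + 2 ≤ 2 ^ (c + 1) →
    phi (2 ^ (2 * j + c) + b) = j + phi (2 ^ c + (b + j)) := by
  intro j
  induction j with
  | zero => intro c b _ _; simp
  | succ j ih =>
    intro c b hc hb
    have e : 2 * (j + 1) + c = 2 * j + (c + 2) := by ring
    have hb' : b + j + 2 ≤ 2 ^ (c + 2 + 1) := by
      have := two_pow_le (show c + 1 ≤ c + 2 + 1 by omega); omega
    rw [e, ih (c+2) b (by omega) hb']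
    rw [phi_pow_step c (b + j) hc (by omega)]
    have e2 : b + (j + 1) = b + j + 1 := by omega
    rw [e2]
    omega

lemma phi_three_pow : ∀ s : ℕ, 2 ≤ s → phi (3 * 2 ^ s - s) = s := by
  intro s
  induction s with
  | zero => omega
  | succ s ih =>
    intro hs
    rcases Nat.lt_or_ge s 2 with h | h
    · interval_cases s
      · omega
      · -- s+1 = 2 : phi 10 = 2
        have := phi_pow_two 1 2 (by norm_num) (by norm_num)
        norm_num at this ⊢
        exact this
    · -- step
      have hx : (4:ℕ) ≤ 2 ^ s := by
        calc (4:ℕ) = 2 ^ 2 := rfl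
        _ ≤ 2 ^ s := two_pow_le h
      have hs2 : s < 2 ^ s := (Nat.lt_two_pow_self (n := s))
      have e1 : (2:ℕ) ^ (s+1) = 2 * 2 ^ s := by ring
      have h4 : ¬ (3 * 2 ^ (s+1) - (s+1) ≤ 4) := by omega
      have hmax : maxMu (3 * 2 ^ (s+1) - (s+1)) = s := by
        apply maxMu_eq (by omega)
        · rw [mu_eq]; omega
        · rw [mu_eq]; omega
      have hrval : 3 * 2 ^ (s+1) - (s+1) - mu (maxMu (3 * 2 ^ (s+1) - (s+1)))
          = 3 * 2 ^ s - s := by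
        rw [hmax, mu_eq]; omega
      have hrne : 3 * 2 ^ (s+1) - (s+1) - mu (maxMu (3 * 2 ^ (s+1) - (s+1)))
          ≠ mu (maxMu (3 * 2 ^ (s+1) - (s+1))) := by
        rw [hrval, hmax, mu_eq]; omega
      rw [phi_one h4 hrne, hrval, ih h]
      omega

lemma phi_le : ∀ m : ℕ, phi m ≤ Nat.log 2 (m + 1) := by
  intro m
  induction m using Nat.strong_induction_on with
  | _ m ih =>
    by_cases h4 : m ≤ 4
    · rw [phi_small h4]; omega
    · have h5 : 5 ≤ m := by omega
      have hlog2 : 2 ≤ Nat.log 2 (m + 1) := by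
        have : (2:ℕ) ^ 2 ≤ m + 1 := by omega
        exact (Nat.le_log_iff_pow_le (by norm_num) (by omega)).mpr this
      by_cases hr : m - mu (maxMu m) = mu (maxMu m)
      · rw [phi_two h4 hr]; omega
      · rw [phi_one h4 hr]
        set ℓ := maxMu m with hℓ
        have hmle : mu ℓ ≤ m := mu_maxMu_le h5
        have hmlt : m < mu (ℓ + 1) := lt_mu_maxMu_succ h5
        have hpos : 1 ≤ ℓ := maxMu_pos h5
        have h2p : (2:ℕ) ≤ 2 ^ ℓ := by
          calc (2:ℕ) = 2 ^ 1 := rfl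
          _ ≤ _ := two_pow_le hpos
        have e1 : (2:ℕ) ^ (ℓ+1) = 2 * 2 ^ ℓ := by ring
        have hmu1 : mu (ℓ+1) = 3 * 2 ^ (ℓ+1) - 1 := mu_eq _
        have hmu0 : mu ℓ = 3 * 2 ^ ℓ - 1 := mu_eq _
        -- r < mu ℓ, hence 2*(r+1) ≤ m+1
        have hrlt : m - mu ℓ < mu ℓ := by omega
        have hkey : 2 * (m - mu ℓ + 1) ≤ m + 1 := by omega
        have ihr : phi (m - mu ℓ) ≤ Nat.log 2 (m - mu ℓ + 1) :=
          ih _ (by omega)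
        have hmono : Nat.log 2 (2 * (m - mu ℓ + 1)) ≤ Nat.log 2 (m + 1) :=
          Nat.log_mono_right hkey
        have hdouble : Nat.log 2 (2 * (m - mu ℓ + 1)) = Nat.log 2 (m - mu ℓ + 1) + 1 := by
          rw [mul_comm]
          exact Nat.log_mul_base (by norm_num) (by omega)
        omega
end

section
variable {n m i j : ℕ}
lemma part1 : ∀ k : ℕ, 1 ≤ k → phi (2 ^ (2 ^ (k + 2) - k)) = 2 ^ (k + 1) := by
  intro k hk
  rcases Nat.lt_or_ge k 2 with h | h
  · -- k = 1
    interval_cases k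
    have h1 := phi_chain 2 3 0 (by norm_num) (by norm_num)
    have h2 := phi_three_pow 2 (le_refl 2)
    norm_num at h1 h2 ⊢
    omega
  · -- k ≥ 2
    have hk2 : k < 2 ^ k := (Nat.lt_two_pow_self (n := k))
    have e1 : (2:ℕ) ^ (k+1) = 2 * 2 ^ k := by ring
    have e2 : (2:ℕ) ^ (k+2) = 4 * 2 ^ k := by ring
    have hexp : 2 ^ (k+2) - k = 2 * (2 ^ (k+1) - k) + k := by omega
    have h1 := phi_chain (2 ^ (k+1) - k) k 0 (by omega) (by omega)
    rw [Nat.add_zero] at h1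
    rw [hexp, h1]
    have e3 : 2 ^ k + (0 + (2 ^ (k+1) - k)) = 3 * 2 ^ k - k := by omega
    rw [e3, phi_three_pow k h]
    omega

lemma phi_pow_bound : ∀ h : ℕ, 3 ≤ h → 2 * phi (2 ^ h) ≤ h + Nat.log 2 (h + 2) + 5 := by
  intro h hh
  have hex : ∃ j, 2 ^ (h - (2 * j + 1)) < j + 3 := by
    refine ⟨h, ?_⟩
    have : h - (2 * h + 1) = 0 := by omega
    rw [this]; omega
  set J := Nat.find hex with hJ
  have hQJ : 2 ^ (h - (2 * J + 1)) < J + 3 := Nat.find_spec hex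
  have hJ1 : 1 ≤ J := by
    rcases Nat.eq_zero_or_pos J with h0 | h0
    · exfalso
      have := hQJ
      rw [h0] at this
      simp at this
      have h4 : (4:ℕ) ≤ 2 ^ (h - 1) := by
        calc (4:ℕ) = 2 ^ 2 := rfl
        _ ≤ _ := two_pow_le (by omega)
      omega
    · exact h0
  have hnot := Nat.find_min hex (m := J - 1) (by omega)
  push_neg at hnot
  -- hnot : J + 2 ≤ 2 ^ (h - (2*(J-1)+1))
  have hnot' : J - 1 + 3 ≤ 2 ^ (h - (2 * (J - 1) + 1)) := hnot
  have h2J : 2 * J + 1 ≤ h := by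
    by_contra hcon
    push_neg at hcon
    have he : h - (2 * (J - 1) + 1) ≤ 1 := by omega
    have : (2:ℕ) ^ (h - (2 * (J - 1) + 1)) ≤ 2 ^ 1 := two_pow_le he
    simp at this
    omega
  set c := h - 2 * J with hc
  have hc1 : 1 ≤ c := by omega
  have hce : h - (2 * (J - 1) + 1) = c + 1 := by omega
  rw [hce] at hnot'
  have hchain := phi_chain J c 0 hc1 (by omega)
  have hh' : h = 2 * J + c := by omega
  rw [zero_add] at hchain
  -- 2^c ≤ 2*(J+2)
  have hcq : h - (2 * J + 1) = c - 1 := by omega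
  rw [hcq] at hQJ
  have h2c : (2:ℕ) ^ c ≤ 2 * (J + 2) := by
    have : (2:ℕ) ^ c = 2 * 2 ^ (c - 1) := by
      rw [← pow_succ']
      congr 1
      omega
    omega
  -- tail bound
  have htail : phi (2 ^ c + J) ≤ Nat.log 2 (J + 2) + 2 := by
    have h1 := phi_le (2 ^ c + J)
    have h2 : 2 ^ c + J + 1 < 2 ^ (Nat.log 2 (J + 2) + 3) := by
      have hp : J + 2 < 2 ^ (Nat.log 2 (J + 2) + 1) := Nat.lt_pow_succ_log_self (by norm_num) _
      have : (2:ℕ) ^ (Nat.log 2 (J + 2) + 3) = 4 * 2 ^ (Nat.log 2 (J + 2) + 1) := by ring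
      omega
    have h3 : Nat.log 2 (2 ^ c + J + 1) < Nat.log 2 (J + 2) + 3 :=
      (Nat.log_lt_iff_lt_pow (by norm_num) (by omega)).mpr h2
    omega
  -- 2J + log(J+2) ≤ h + 1
  have hnot'' : J + 2 ≤ 2 ^ (c + 1) := by omega
  have hlogc : Nat.log 2 (J + 2) ≤ c + 1 := by
    have := Nat.log_mono_right (b := 2) hnot''
    rwa [Nat.log_pow (by norm_num)] at this
  have hjh : Nat.log 2 (J + 2) ≤ Nat.log 2 (h + 2) := Nat.log_mono_right (by omega)
  rw [Nat.add_zero] at hchain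
  rw [hh'] at hjh ⊢
  rw [hchain]
  omega
end

lemma natpow_cast (k : ℕ) : ((2 ^ k : ℕ) : ℝ) = (2:ℝ) ^ k := by push_cast; ring

lemma logb_nat_pow (k : ℕ) : Real.logb 2 ((2:ℝ) ^ k) = k := by
  rw [Real.logb_pow, Real.logb_self_eq_one (by norm_num)]; ring

lemma alphaF_formula {k : ℕ} (hk : 3 ≤ k) :
    alphaF (2 ^ (k + 2) - k) = ((k:ℝ) - 2) / Real.logb 2 (((2 ^ (k + 2) - k : ℕ) : ℝ) + 2) := by
  unfold alphaF
  rw [part1 k (by omega)]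
  congr 1
  have hsub : k ≤ 2 ^ (k + 2) := le_of_lt (lt_of_lt_of_le ((Nat.lt_two_pow_self (n := k)))
    (Nat.pow_le_pow_right (by norm_num) (by omega)))
  rw [Nat.cast_sub hsub]
  push_cast
  ring

lemma tend_aux (c d : ℝ) (hd : 0 < d) :
    Tendsto (fun k : ℕ => ((k:ℝ) - c) / ((k:ℝ) + d)) atTop (nhds 1) := by
  have h1 : Tendsto (fun k : ℕ => ((k:ℝ) + d)) atTop atTop :=
    tendsto_atTop_add_const_right _ d tendsto_natCast_atTop_atTop
  have h0 : Tendsto (fun k : ℕ => (c + d) / ((k:ℝ) + d)) atTop (nhds 0) :=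
    Tendsto.div_atTop tendsto_const_nhds h1
  have h2 : Tendsto (fun k : ℕ => 1 - (c + d) / ((k:ℝ) + d)) atTop (nhds 1) := by
    simpa using tendsto_const_nhds.sub h0
  apply h2.congr'
  filter_upwards [eventually_ge_atTop 1] with k hk
  have hkpos : (0:ℝ) < (k:ℝ) := by exact_mod_cast (by omega : 0 < k)
  have hz : ((k:ℝ) + d) ≠ 0 := by positivity
  field_simp
  ring

lemma part2 : Tendsto (fun k : ℕ => alphaF (2 ^ (k + 2) - k)) atTop (nhds 1) := by
  apply tendsto_of_tendsto_of_tendsto_of_le_of_le' (tend_aux 2 2 (by norm_num)) (tend_aux 2 1 (by norm_num))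
  · -- lower ≤ alphaF
    filter_upwards [eventually_ge_atTop 3] with k hk
    rw [alphaF_formula hk]
    have hsub : k ≤ 2 ^ (k + 2) := le_of_lt (lt_of_lt_of_le ((Nat.lt_two_pow_self (n := k)))
      (Nat.pow_le_pow_right (by norm_num) (by omega)))
    set X : ℝ := ((2 ^ (k + 2) - k : ℕ) : ℝ) + 2 with hX
    have hXval : X = (2:ℝ) ^ (k + 2) - k + 2 := by
      rw [hX, Nat.cast_sub hsub]; push_cast; ring
    have hlow : (2:ℝ) ^ (k + 1) ≤ X := by
      rw [hXval]
      have : ((k:ℝ)) ≤ 2 ^ (k+1) := by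
        exact_mod_cast le_of_lt (lt_of_lt_of_le ((Nat.lt_two_pow_self (n := k)))
          (Nat.pow_le_pow_right (by norm_num) (by omega)))
      have e : (2:ℝ) ^ (k+2) = 2 * 2 ^ (k+1) := by ring
      nlinarith
    have hhigh : X ≤ (2:ℝ) ^ (k + 2) := by
      rw [hXval]
      have : (2:ℝ) ≤ (k:ℝ) := by exact_mod_cast (by omega : 2 ≤ k)
      linarith
    have hXpos : (0:ℝ) < (2:ℝ) ^ (k+1) := by positivity
    have hL1 : ((k:ℝ) + 1) ≤ Real.logb 2 X := by
      have := Real.logb_le_logb_of_le (by norm_num : (1:ℝ) < 2) hXpos hlow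
      rwa [logb_nat_pow, (by push_cast; ring : ((k + 1 : ℕ):ℝ) = (k:ℝ) + 1)] at this
    have hL2 : Real.logb 2 X ≤ (k:ℝ) + 2 := by
      have := Real.logb_le_logb_of_le (by norm_num : (1:ℝ) < 2)
        (lt_of_lt_of_le hXpos hlow) hhigh
      rwa [logb_nat_pow, (by push_cast; ring : ((k + 2 : ℕ):ℝ) = (k:ℝ) + 2)] at this
    have hnum : (0:ℝ) ≤ (k:ℝ) - 2 := by
      have : (2:ℝ) ≤ (k:ℝ) := by exact_mod_cast (by omega : 2 ≤ k)
      linarith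
    have hLpos : (0:ℝ) < Real.logb 2 X := by linarith [hL1, (by positivity : (0:ℝ) ≤ (k:ℝ))]
    calc ((k:ℝ) - 2) / ((k:ℝ) + 2) ≤ ((k:ℝ) - 2) / Real.logb 2 X := by
          apply div_le_div_of_nonneg_left hnum hLpos hL2
      _ = _ := rfl
  · filter_upwards [eventually_ge_atTop 3] with k hk
    rw [alphaF_formula hk]
    -- same setup
    have hsub : k ≤ 2 ^ (k + 2) := le_of_lt (lt_of_lt_of_le ((Nat.lt_two_pow_self (n := k)))
      (Nat.pow_le_pow_right (by norm_num) (by omega)))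
    set X : ℝ := ((2 ^ (k + 2) - k : ℕ) : ℝ) + 2 with hX
    have hXval : X = (2:ℝ) ^ (k + 2) - k + 2 := by
      rw [hX, Nat.cast_sub hsub]; push_cast; ring
    have hlow : (2:ℝ) ^ (k + 1) ≤ X := by
      rw [hXval]
      have : ((k:ℝ)) ≤ 2 ^ (k+1) := by
        exact_mod_cast le_of_lt (lt_of_lt_of_le ((Nat.lt_two_pow_self (n := k)))
          (Nat.pow_le_pow_right (by norm_num) (by omega)))
      have e : (2:ℝ) ^ (k+2) = 2 * 2 ^ (k+1) := by ring
      nlinarith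
    have hXpos : (0:ℝ) < (2:ℝ) ^ (k+1) := by positivity
    have hL1 : ((k:ℝ) + 1) ≤ Real.logb 2 X := by
      have := Real.logb_le_logb_of_le (by norm_num : (1:ℝ) < 2) hXpos hlow
      rwa [logb_nat_pow, (by push_cast; ring : ((k + 1 : ℕ):ℝ) = (k:ℝ) + 1)] at this
    have hnum : (0:ℝ) ≤ (k:ℝ) - 2 := by
      have : (2:ℝ) ≤ (k:ℝ) := by exact_mod_cast (by omega : 2 ≤ k)
      linarith
    have hk1pos : (0:ℝ) < (k:ℝ) + 1 := by positivity
    calc ((k:ℝ) - 2) / Real.logb 2 X ≤ ((k:ℝ) - 2) / ((k:ℝ) + 1) := by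
          apply div_le_div_of_nonneg_left hnum hk1pos hL1

lemma logb_ge_two {h : ℕ} (hh : 3 ≤ h) : 2 ≤ Real.logb 2 ((h:ℝ) + 2) := by
  have h4 : (4:ℝ) ≤ (h:ℝ) + 2 := by
    have : (3:ℝ) ≤ (h:ℝ) := by exact_mod_cast hh
    linarith
  have := Real.logb_le_logb_of_le (by norm_num : (1:ℝ) < 2) (by norm_num : (0:ℝ) < 4) h4
  rwa [show (4:ℝ) = (2:ℝ)^(2:ℕ) by norm_num, logb_nat_pow] at this

lemma hub : ∀ᶠ h in atTop, alphaF h ≤ 1 + 3 / Real.logb 2 ((h:ℝ) + 2) := by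
  filter_upwards [eventually_ge_atTop 3] with h hh
  have hb := phi_pow_bound h hh
  set L := Real.logb 2 ((h:ℝ) + 2) with hL
  have hL2 : 2 ≤ L := logb_ge_two hh
  have hL0 : (0:ℝ) < L := by linarith
  have hlogle : (Nat.log 2 (h + 2) : ℝ) ≤ L := by
    have := Real.natLog_le_logb (h + 2) 2
    push_cast at this
    rw [hL]
    convert this using 2
  have hnum : 2 * (phi (2 ^ h) : ℝ) - ((h:ℝ) + 2) ≤ L + 3 := by
    have hcast : (2 * phi (2 ^ h) : ℝ) ≤ (h:ℝ) + (Nat.log 2 (h + 2) : ℝ) + 5 := by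
      exact_mod_cast hb
    linarith
  have h1 : alphaF h ≤ (L + 3) / L := by
    unfold alphaF
    exact (div_le_div_iff_of_pos_right hL0).mpr hnum
  have h2 : (L + 3) / L = 1 + 3 / L := by
    rw [add_div, div_self (ne_of_gt hL0)]
  rw [h2] at h1
  exact h1


lemma gtend : Tendsto (fun h : ℕ => 1 + 3 / Real.logb 2 ((h:ℝ) + 2)) atTop (nhds 1) := by
  have h1 : Tendsto (fun h : ℕ => ((h:ℝ) + 2)) atTop atTop :=
    tendsto_atTop_add_const_right _ 2 tendsto_natCast_atTop_atTop
  have h2 : Tendsto (fun h : ℕ => Real.logb 2 ((h:ℝ) + 2)) atTop atTop :=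
    (Real.tendsto_logb_atTop (by norm_num : (1:ℝ) < 2)).comp h1
  have h3 : Tendsto (fun h : ℕ => 3 / Real.logb 2 ((h:ℝ) + 2)) atTop (nhds 0) :=
    Tendsto.div_atTop tendsto_const_nhds h2
  simpa using tendsto_const_nhds.add h3

lemma part3 : Filter.limsup alphaF Filter.atTop = 1 := by
  have hBddAbove : IsBoundedUnder (· ≤ ·) atTop alphaF := by
    refine ⟨4, ?_⟩
    rw [eventually_map]
    filter_upwards [hub, eventually_ge_atTop 3] with h h1 h3
    have hL2 : 2 ≤ Real.logb 2 ((h:ℝ) + 2) := logb_ge_two h3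
    have : 3 / Real.logb 2 ((h:ℝ) + 2) ≤ 3 / 2 := by
      apply div_le_div_of_nonneg_left (by norm_num) (by norm_num) hL2
    linarith
  have hsubtend : Tendsto (fun k : ℕ => 2 ^ (k + 2) - k) atTop atTop := by
    apply tendsto_atTop_mono (f := fun k : ℕ => k) (fun k => ?_) tendsto_id
    show k ≤ 2 ^ (k + 2) - k
    have h1 : k < 2 ^ k := (Nat.lt_two_pow_self (n := k))
    have h2 : (2:ℕ) ^ (k + 2) = 4 * 2 ^ k := by ring
    exact Nat.le_sub_of_add_le (by omega)
  have hfreq : ∀ a : ℝ, a < 1 → ∃ᶠ h in atTop, a ≤ alphaF h := by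
    intro a ha
    have hev : ∀ᶠ k in atTop, a ≤ alphaF (2 ^ (k + 2) - k) :=
      part2.eventually (eventually_ge_nhds ha)
    exact hsubtend.frequently hev.frequently
  have h_ge : (1:ℝ) ≤ limsup alphaF atTop := by
    apply le_of_forall_lt
    intro c hc
    have h1 : (c + 1) / 2 ≤ limsup alphaF atTop :=
      le_limsup_of_frequently_le (hfreq _ (by linarith)) hBddAbove
    linarith
  have hCob : IsCoboundedUnder (· ≤ ·) atTop alphaF :=
    IsCoboundedUnder.of_frequently_ge (hfreq 0 (by norm_num))
  have h_le : limsup alphaF atTop ≤ 1 := by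
    have h1 : limsup alphaF atTop ≤
        limsup (fun h : ℕ => 1 + 3 / Real.logb 2 ((h:ℝ) + 2)) atTop :=
      limsup_le_limsup hub hCob gtend.isBoundedUnder_le
    rwa [gtend.limsup_eq] at h1
  linarith

/-- For the family `h_k = 2^{k+2} − k`, `φ(2^{h_k}) = 2^{k+1}`; consequently
`α(h_k) → 1` as `k → ∞`, and `limsup_{h→∞} α(h) = 1`. -/
theorem alpha_limsup :
    (∀ k : ℕ, 1 ≤ k → phi (2 ^ (2 ^ (k + 2) - k)) = 2 ^ (k + 1)) ∧
    Filter.Tendsto (fun k : ℕ => alphaF (2 ^ (k + 2) - k))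
      Filter.atTop (nhds 1) ∧
    Filter.limsup alphaF Filter.atTop = 1 :=
  ⟨part1, part2, part3⟩
end
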